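/- For a geometrically uniform state set with linearly independent states, the reciprocal states are also geometrically uniform with the same generating group: for every g ∈ G, the column of Φ̃ = Φ(ΦᴴΦ)⁻¹ indexed by g equals ρ(g)·φ̃, where φ̃ is the column of Φ̃ indexed by the identity element of G. -/

import Mathlib

open Matrix BigOperators ComplexOrder

noncomputable section

/-- The matrix whose column indexed by `g` is the state `ρ(g) φ`. -/
def guMatrix {G : Type*} [Group G] [Fintype G] (n : ℕ)
    (ρ : G →* Matrix.unitaryGroup (Fin n) ℂ) (φ : Fin n → ℂ) :
    Matrix (Fin n) G ℂ :=
  Matrix.of fun j g => ((ρ g : Matrix (Fin n) (Fin n) ℂ).mulVec φ) j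

theorem stmt_14 {G : Type*} [Group G] [Fintype G] [DecidableEq G] (n : ℕ)
    (ρ : G →* Matrix.unitaryGroup (Fin n) ℂ) (φ : Fin n → ℂ)
    (hind : LinearIndependent ℂ (fun g : G => (ρ g : Matrix (Fin n) (Fin n) ℂ).mulVec φ)) :
    ∀ g : G,
      (fun j : Fin n =>
          (guMatrix n ρ φ * ((guMatrix n ρ φ)ᴴ * guMatrix n ρ φ)⁻¹) j g) =
        (ρ g : Matrix (Fin n) (Fin n) ℂ).mulVec
          (fun j : Fin n =>
            (guMatrix n ρ φ * ((guMatrix n ρ φ)ᴴ * guMatrix n ρ φ)⁻¹) j (1 : G)) := by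
  intro g
  set Φ : Matrix (Fin n) G ℂ := guMatrix n ρ φ with hΦ
  set A : Matrix G G ℂ := Φᴴ * Φ with hA
  set P : Matrix G G ℂ := Matrix.of (fun a b => if a = g * b then (1:ℂ) else 0) with hP
  have hPH : Pᴴ * P = 1 := by
    ext b c
    simp only [Matrix.mul_apply, Matrix.conjTranspose_apply, hP, Matrix.of_apply]
    have h1 : ∀ a : G, (star (if a = g*b then (1:ℂ) else 0)) * (if a = g*c then 1 else 0)
        = if a = g*b then (if (g*b : G) = g*c then (1:ℂ) else 0) else 0 := by
      intro a; by_cases h : a = g*b <;> simp [h]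
    rw [Finset.sum_congr rfl fun a _ => h1 a, Finset.sum_ite_eq' Finset.univ (g*b)]
    simp [Matrix.one_apply, mul_left_cancel_iff, eq_comm]
  have hPPH : P * Pᴴ = 1 := by
    ext a c
    simp only [Matrix.mul_apply, Matrix.conjTranspose_apply, hP, Matrix.of_apply]
    have h1 : ∀ b : G, (if a = g*b then (1:ℂ) else 0) * star (if c = g*b then (1:ℂ) else 0)
        = if b = g⁻¹*a then (if c = a then (1:ℂ) else 0) else 0 := by
      intro b
      by_cases h : b = g⁻¹ * a
      · subst h; simp
      · have : a ≠ g * b := by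
          intro hh; exact h (by rw [hh]; group)
        simp [this, h]
    rw [Finset.sum_congr rfl fun b _ => h1 b, Finset.sum_ite_eq' Finset.univ (g⁻¹*a)]
    simp [Matrix.one_apply, eq_comm]
  have hPinv : P⁻¹ = Pᴴ := Matrix.inv_eq_left_inv hPH
  have hPHinv : (Pᴴ)⁻¹ = P := Matrix.inv_eq_left_inv hPPH
  have hρΦ : (ρ g : Matrix (Fin n) (Fin n) ℂ) * Φ = Φ * P := by
    ext j b
    have : (Φ * P) j b = Φ j (g * b) := by
      simp only [Matrix.mul_apply, hP, Matrix.of_apply, mul_ite, mul_one, mul_zero]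
      rw [Finset.sum_ite_eq' Finset.univ (g*b)]
      simp
    rw [this]
    simp only [hΦ, guMatrix, Matrix.mul_apply, Matrix.of_apply, Matrix.mulVec, dotProduct]
    rw [map_mul ρ g b]
    simp only [Matrix.UnitaryGroup.mul_apply, Matrix.mul_apply, Finset.sum_mul]
    rw [Finset.sum_comm]
    congr 1; ext k
    rw [Finset.mul_sum]
    congr 1; ext l
    ring
  have hUg : (ρ g : Matrix (Fin n) (Fin n) ℂ)ᴴ * (ρ g : Matrix (Fin n) (Fin n) ℂ) = 1 :=
    (ρ g).prop.1
  have hAconj : A = Pᴴ * A * P := by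
    calc A = Φᴴ * Φ := hA
    _ = Φᴴ * ((ρ g : Matrix (Fin n) (Fin n) ℂ)ᴴ * (ρ g : Matrix (Fin n) (Fin n) ℂ)) * Φ := by
        rw [hUg]; rw [Matrix.mul_one]
    _ = ((ρ g : Matrix (Fin n) (Fin n) ℂ) * Φ)ᴴ * ((ρ g : Matrix (Fin n) (Fin n) ℂ) * Φ) := by
        rw [Matrix.conjTranspose_mul]; simp only [Matrix.mul_assoc]
    _ = (Φ * P)ᴴ * (Φ * P) := by rw [hρΦ]
    _ = Pᴴ * A * P := by rw [Matrix.conjTranspose_mul, hA]; simp only [Matrix.mul_assoc]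
  have hinvconj : A⁻¹ = Pᴴ * A⁻¹ * P := by
    conv_lhs => rw [hAconj]
    rw [Matrix.mul_inv_rev, Matrix.mul_inv_rev, hPinv, hPHinv]
    simp only [Matrix.mul_assoc]
  have hcomm : P * A⁻¹ = A⁻¹ * P := by
    conv_lhs => rw [hinvconj]
    rw [← Matrix.mul_assoc, ← Matrix.mul_assoc, hPPH, Matrix.one_mul]
  have key : (ρ g : Matrix (Fin n) (Fin n) ℂ) * (Φ * A⁻¹) = (Φ * A⁻¹) * P := by
    rw [← Matrix.mul_assoc, hρΦ, Matrix.mul_assoc, hcomm, ← Matrix.mul_assoc]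
  funext j
  have h2 : ((Φ * A⁻¹) * P) j (1 : G) = (Φ * A⁻¹) j g := by
    rw [Matrix.mul_apply]
    simp only [hP, Matrix.of_apply,
      mul_ite, mul_one, mul_zero]
    rw [Finset.sum_ite_eq' Finset.univ g]
    simp
  calc (Φ * A⁻¹) j g = ((Φ * A⁻¹) * P) j (1:G) := h2.symm
  _ = ((ρ g : Matrix (Fin n) (Fin n) ℂ) * (Φ * A⁻¹)) j (1:G) := by rw [key]
  _ = (ρ g : Matrix (Fin n) (Fin n) ℂ).mulVec (fun j => (Φ * A⁻¹) j (1:G)) j := by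
      simp [Matrix.mul_apply, Matrix.mulVec, dotProduct]
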